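/- Let R be a commutative ring, M an R-module, S a multiplicatively closed subset of R (a submonoid of R containing 1), and let ψ : M → M_S be the canonical map to the localization of M at S. If U is a 𝔓-primary R_S-submodule of M_S (𝔓 a prime ideal of R_S), then the preimage ψ⁻¹(U) is a 𝔭-primary R-submodule of M where 𝔭 = 𝔓 ∩ R (the preimage of 𝔓 in R), 𝔭 ∩ S = ∅, and the R_S-submodule of M_S generated by ψ(ψ⁻¹(U)) equals U. -/

import Mathlib

section Defs

variable (A L : Type*) [CommRing A] [AddCommGroup L] [Module A L]

/-- `a ∈ A` is a zero divisor for the module `L`: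
`a • y = 0` for some `y ≠ 0` in `L`. -/
def IsZeroDivisorFor (a : A) : Prop := ∃ y : L, y ≠ 0 ∧ a • y = 0

/-- `a ∈ A` is nilpotent for the module `L`: for every `y ∈ L` there is `n`
with `a ^ n • y = 0`. -/
def IsNilpotentFor (a : A) : Prop := ∀ y : L, ∃ n : ℕ, a ^ n • y = 0

/-- `L` is `q`-coprimary: `L ≠ 0`, every zero divisor for `L` lies in `q`,
and every element of `q` is nilpotent for `L`. -/
def IsCoprimaryFor (q : Ideal A) : Prop :=
  (∃ y : L, y ≠ 0) ∧ (∀ a : A, IsZeroDivisorFor A L a → a ∈ q) ∧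
    ∀ a ∈ q, IsNilpotentFor A L a

/-- A submodule `N` of `L` is `q`-primary in `L` iff `L ⧸ N` is `q`-coprimary. -/
def IsPrimaryIn (N : Submodule A L) (q : Ideal A) : Prop :=
  IsCoprimaryFor A (L ⧸ N) q

/-- The `S`-component of `N` in `L`: `{x ∈ L | ∃ s ∈ S, s • x ∈ N}`,
for an arbitrary subset `S ⊆ A`. -/
def sComp (S : Set A) (N : Submodule A L) : Set L := {x : L | ∃ s ∈ S, s • x ∈ N}

/-- A prime ideal `p` is Krull-associated to `L` iff for every multiplicatively
closed subset `T ⊋ A ∖ p` one has `T^L((0)) ⊋ (A ∖ p)^L((0))`. -/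
def KrullAssociated (p : Ideal A) : Prop :=
  ∀ T : Submonoid A, ((p : Set A)ᶜ ⊂ (T : Set A)) →
    sComp A L ((p : Set A)ᶜ) ⊥ ⊂ sComp A L (T : Set A) ⊥

end Defs

/-- If `U` is a `𝔓`-primary `R_S`-submodule of `M_S`, then
`ψ⁻¹(U)` is `𝔭 = 𝔓 ∩ R`-primary in `M`, `𝔭 ∩ S = ∅`, and the `R_S`-submodule
of `M_S` generated by `ψ(ψ⁻¹(U))` is `U`. -/
theorem statement1 {R M : Type*} [CommRing R] [AddCommGroup M] [Module R M]
    (S : Submonoid R) (𝔓 : Ideal (Localization S)) [𝔓.IsPrime]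
    (U : Submodule (Localization S) (LocalizedModule S M))
    (hU : IsPrimaryIn (Localization S) (LocalizedModule S M) U 𝔓) :
    IsPrimaryIn R M ((U.restrictScalars R).comap (LocalizedModule.mkLinearMap S M))
        (𝔓.comap (algebraMap R (Localization S))) ∧
      ((𝔓.comap (algebraMap R (Localization S)) : Set R) ∩ (S : Set R) = ∅) ∧
      Submodule.span (Localization S)
        ((LocalizedModule.mkLinearMap S M) ''
          (((U.restrictScalars R).comap (LocalizedModule.mkLinearMap S M) : Submodule R M) : Set M))
        = U := by
  classical
  set ψ := LocalizedModule.mkLinearMap S M with hψ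
  set N := (U.restrictScalars R).comap ψ with hN
  have hmemN : ∀ x : M, x ∈ N ↔ ψ x ∈ U := fun x => Iff.rfl
  -- key: r • v = algebraMap r • v in the localized module
  have hsmul : ∀ (r : R) (v : LocalizedModule S M),
      algebraMap R (Localization S) r • v = r • v := fun r v =>
    algebraMap_smul (Localization S) r v
  -- for s ∈ S, s • (mk m s) = ψ m
  have hkey : ∀ (m : M) (s : S), (s : R) • LocalizedModule.mk m s = ψ m := by
    intro m s
    rw [LocalizedModule.smul'_mk]
    exact LocalizedModule.mk_cancel s m
  -- if v ∈ M_S and s • v ∈ U for s ∈ S then v ∈ U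
  have hcancel : ∀ (v : LocalizedModule S M) (s : S), (s : R) • v ∈ U → v ∈ U := by
    intro v s hv
    have hu : IsUnit (algebraMap R (Localization S) (s : R)) :=
      IsLocalization.map_units (Localization S) s
    obtain ⟨u, hueq⟩ := hu
    have : (↑u⁻¹ : Localization S) • ((s : R) • v) ∈ U := U.smul_mem _ hv
    rwa [← hsmul, ← hueq, ← smul_assoc, smul_eq_mul, u.inv_mul, one_smul] at this
  -- part 2 : 𝔭 ∩ S = ∅
  have part2 : ((𝔓.comap (algebraMap R (Localization S)) : Set R) ∩ (S : Set R) = ∅) := by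
    ext r
    simp only [Set.mem_inter_iff, Set.mem_empty_iff_false, iff_false, not_and]
    intro hr hrS
    have hu : IsUnit (algebraMap R (Localization S) r) :=
      IsLocalization.map_units (Localization S) ⟨r, hrS⟩
    exact ‹𝔓.IsPrime›.ne_top (𝔓.eq_top_of_isUnit_mem hr hu)
  -- part 3 : span = U
  have part3 : Submodule.span (Localization S) (ψ '' (N : Set M)) = U := by
    apply le_antisymm
    · rw [Submodule.span_le]
      rintro _ ⟨x, hx, rfl⟩
      exact (hmemN x).mp hx
    · intro v hv
      induction v using LocalizedModule.induction_on with
      | h m s =>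
        have h1 : ψ m ∈ U := by
          rw [← hkey m s, ← hsmul]; exact U.smul_mem _ hv
        have h2 : ψ m ∈ Submodule.span (Localization S) (ψ '' (N : Set M)) :=
          Submodule.subset_span ⟨m, (hmemN m).mpr h1, rfl⟩
        obtain ⟨u, hueq⟩ := IsLocalization.map_units (Localization S) s
        have h3 := Submodule.smul_mem _ (↑u⁻¹ : Localization S) h2
        rwa [← hkey m s, ← hsmul, ← hueq, ← smul_assoc, smul_eq_mul, u.inv_mul, one_smul] at h3
  refine ⟨⟨?_, ?_, ?_⟩, part2, part3⟩
  · -- M ⧸ N ≠ 0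
    obtain ⟨z, hz⟩ := hU.1
    obtain ⟨v, rfl⟩ := Submodule.Quotient.mk_surjective U z
    have hv : v ∉ U := fun h => hz ((Submodule.Quotient.mk_eq_zero U).mpr h)
    induction v using LocalizedModule.induction_on with
    | h m s =>
      refine ⟨Submodule.Quotient.mk m, ?_⟩
      intro h0
      have hm : m ∈ N := (Submodule.Quotient.mk_eq_zero N).mp h0
      exact hv (hcancel _ s ((hkey m s).symm ▸ (hmemN m).mp hm))
  · -- zero divisors
    rintro r ⟨y, hy, hry⟩
    obtain ⟨x, rfl⟩ := Submodule.Quotient.mk_surjective N y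
    have hx : x ∉ N := fun h => hy ((Submodule.Quotient.mk_eq_zero N).mpr h)
    have hrx : r • x ∈ N := by
      rwa [← Submodule.Quotient.mk_smul, Submodule.Quotient.mk_eq_zero] at hry
    refine hU.2.1 (algebraMap R (Localization S) r)
      ⟨Submodule.Quotient.mk (ψ x), ?_, ?_⟩
    · intro h0
      exact hx ((hmemN x).mpr ((Submodule.Quotient.mk_eq_zero U).mp h0))
    · rw [← Submodule.Quotient.mk_smul, Submodule.Quotient.mk_eq_zero, hsmul,
        ← map_smul]
      exact (hmemN (r • x)).mp hrx
  · -- nilpotency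
    intro a ha y
    obtain ⟨x, rfl⟩ := Submodule.Quotient.mk_surjective N y
    obtain ⟨n, hn⟩ := hU.2.2 _ ha (Submodule.Quotient.mk (ψ x))
    refine ⟨n, ?_⟩
    rw [← Submodule.Quotient.mk_smul, Submodule.Quotient.mk_eq_zero]
    rw [← map_pow, ← Submodule.Quotient.mk_smul, Submodule.Quotient.mk_eq_zero,
      hsmul, ← map_smul] at hn
    exact (hmemN (a ^ n • x)).mpr hn
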